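/- For any fixed φ ∈ ℝ, the identity F'(U⃗_σ) = e^{iφ} F(U⃗) holds for every sequence U⃗ = (U_1,…,U_m) of 2×2 unitary matrices if and only if F'(P⃗_σ) = e^{iφ} F(P⃗) holds for every P⃗ ∈ 𝒫^m (with the same φ). -/

import Mathlib

open Matrix Complex

noncomputable section

namespace QEC

/-- The space of `n`-qubit operators: `2^n × 2^n` complex matrices, with the
index set realized as `Fin n → Fin 2`. -/
abbrev QMat (n : ℕ) := Matrix (Fin n → Fin 2) (Fin n → Fin 2) ℂ

/-- The Pauli `X` matrix. -/
def PX : Matrix (Fin 2) (Fin 2) ℂ := !![0, 1; 1, 0]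

/-- The Pauli `Y` matrix. -/
def PY : Matrix (Fin 2) (Fin 2) ℂ := !![0, -Complex.I; Complex.I, 0]

/-- The Pauli `Z` matrix. -/
def PZ : Matrix (Fin 2) (Fin 2) ℂ := !![1, 0; 0, -1]

/-- The four single-qubit Pauli matrices `𝒫 = {I, X, Y, Z}`, indexed by `Fin 4`. -/
def pauli : Fin 4 → Matrix (Fin 2) (Fin 2) ℂ := ![1, PX, PY, PZ]

/-- `A^{(k)} = I^{⊗(k-1)} ⊗ A ⊗ I^{⊗(n-k)}`: the single-qubit operator `A`
acting on the `k`-th qubit of an `n`-qubit system. -/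
def embed {n : ℕ} (k : Fin n) (A : Matrix (Fin 2) (Fin 2) ℂ) : QMat n :=
  fun x y => A (x k) (y k) * ∏ q ∈ Finset.univ.erase k, (if x q = y q then (1 : ℂ) else 0)

/-- The Kronecker product `P 0 ⊗ P 1 ⊗ ⋯ ⊗ P (n-1)` of `n` single-qubit operators. -/
def kron {n : ℕ} (P : Fin n → Matrix (Fin 2) (Fin 2) ℂ) : QMat n :=
  fun x y => ∏ q, P q (x q) (y q)

/-- The circuit `F(A⃗) = C_m A_m^{(k_m)} C_{m-1} ⋯ C_1 A_1^{(k_1)} C_0`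
(here the layers are indexed by `Fin m`, with `i : Fin m` standing for layer `i+1`). -/
def circuit {n m : ℕ} (C : Fin (m + 1) → QMat n) (k : Fin m → Fin n)
    (A : Fin m → Matrix (Fin 2) (Fin 2) ℂ) : QMat n :=
  ((List.ofFn fun i : Fin m => C i.succ * embed (k i) (A i)).reverse).prod * C 0

/-- The cumulative product `C_{m:i} = C_m C_{m-1} ⋯ C_i`. -/
def Ccum {n m : ℕ} (C : Fin (m + 1) → QMat n) (i : Fin (m + 1)) : QMat n :=
  (((List.ofFn C).reverse).take (m + 1 - (i : ℕ))).prod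

/-- `V_i(P) = C_{m:i} P^{(k_i)} C_{m:i}^†` (with `i : Fin m` standing for layer `i+1`). -/
def Vop {n m : ℕ} (C : Fin (m + 1) → QMat n) (k : Fin m → Fin n) (i : Fin m)
    (P : Matrix (Fin 2) (Fin 2) ℂ) : QMat n :=
  Ccum C i.succ * embed (k i) P * (Ccum C i.succ)ᴴ

/-- `W(P⃗) = V_m(P_m) V_{m-1}(P_{m-1}) ⋯ V_1(P_1)`. -/
def Wop {n m : ℕ} (C : Fin (m + 1) → QMat n) (k : Fin m → Fin n)
    (P : Fin m → Matrix (Fin 2) (Fin 2) ℂ) : QMat n :=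
  ((List.ofFn fun i : Fin m => Vop C k i (P i)).reverse).prod

/-- The global phase `e^{iφ}`. -/
def phase (φ : ℝ) : ℂ := Complex.exp ((φ : ℂ) * Complex.I)

/-- A unitary `C` is Clifford when it maps every Pauli string to a signed Pauli
string under conjugation. -/
def IsClifford {n : ℕ} (C : QMat n) : Prop :=
  ∀ Q : Fin n → Fin 4, ∃ (ε : ℂ) (Q' : Fin n → Fin 4), (ε = 1 ∨ ε = -1) ∧
    C * kron (fun q => pauli (Q q)) * Cᴴ = ε • kron (fun q => pauli (Q' q))


lemma embed_add {n : ℕ} (k : Fin n) (A B : Matrix (Fin 2) (Fin 2) ℂ) :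
    embed k (A + B) = embed k A + embed k B := by
  funext x y
  simp [embed, Matrix.add_apply, add_mul]

lemma embed_smul {n : ℕ} (k : Fin n) (c : ℂ) (A : Matrix (Fin 2) (Fin 2) ℂ) :
    embed k (c • A) = c • embed k A := by
  funext x y
  simp [embed, Matrix.smul_apply, smul_eq_mul, mul_assoc]

lemma prod_map_add {m n : ℕ} (a : Fin m) (f g h : Fin m → QMat n)
    (hfg : ∀ i, i ≠ a → f i = g i) (hfh : ∀ i, i ≠ a → f i = h i)
    (ha : f a = g a + h a) :
    ∀ L : List (Fin m), L.Nodup → a ∈ L →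
      (L.map f).prod = (L.map g).prod + (L.map h).prod := by
  intro L
  induction L with
  | nil => simp
  | cons b L ih =>
    intro hnd hmem
    simp only [List.map_cons, List.prod_cons]
    rcases eq_or_ne b a with rfl | hba
    · have haL : b ∉ L := (List.nodup_cons.mp hnd).1
      have h1 : L.map f = L.map g :=
        List.map_congr_left fun i hi => hfg i (fun e => haL (e ▸ hi))
      have h2 : L.map f = L.map h :=
        List.map_congr_left fun i hi => hfh i (fun e => haL (e ▸ hi))
      rw [ha, ← h1, ← h2, add_mul]
    · have hmem' : a ∈ L := by
        rcases List.mem_cons.mp hmem with e | e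
        · exact absurd e.symm hba
        · exact e
      rw [ih (List.nodup_cons.mp hnd).2 hmem', mul_add]
      nth_rewrite 1 [hfg b hba]
      rw [hfh b hba]

lemma prod_map_smul {m n : ℕ} (a : Fin m) (c : ℂ) (f g : Fin m → QMat n)
    (hfg : ∀ i, i ≠ a → f i = g i) (ha : f a = c • g a) :
    ∀ L : List (Fin m), L.Nodup → a ∈ L →
      (L.map f).prod = c • (L.map g).prod := by
  intro L
  induction L with
  | nil => simp
  | cons b L ih =>
    intro hnd hmem
    simp only [List.map_cons, List.prod_cons]
    rcases eq_or_ne b a with rfl | hba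
    · have haL : b ∉ L := (List.nodup_cons.mp hnd).1
      have h1 : L.map f = L.map g :=
        List.map_congr_left fun i hi => hfg i (fun e => haL (e ▸ hi))
      rw [ha, ← h1, smul_mul_assoc]
    · have hmem' : a ∈ L := by
        rcases List.mem_cons.mp hmem with e | e
        · exact absurd e.symm hba
        · exact e
      rw [ih (List.nodup_cons.mp hnd).2 hmem', hfg b hba, mul_smul_comm]

lemma circuit_eq_prodmap {n m : ℕ} (C : Fin (m + 1) → QMat n) (k : Fin m → Fin n)
    (A : Fin m → Matrix (Fin 2) (Fin 2) ℂ) :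
    circuit C k A =
      (((List.finRange m).reverse).map fun i => C i.succ * embed (k i) (A i)).prod * C 0 := by
  unfold circuit
  rw [List.ofFn_eq_map, List.map_reverse]

lemma circuit_update_add {n m : ℕ} (C : Fin (m + 1) → QMat n) (k : Fin m → Fin n)
    (A : Fin m → Matrix (Fin 2) (Fin 2) ℂ) (a : Fin m) (x y : Matrix (Fin 2) (Fin 2) ℂ) :
    circuit C k (Function.update A a (x + y)) =
      circuit C k (Function.update A a x) + circuit C k (Function.update A a y) := by
  rw [circuit_eq_prodmap, circuit_eq_prodmap, circuit_eq_prodmap,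
    prod_map_add a
      (fun i => C i.succ * embed (k i) (Function.update A a (x + y) i))
      (fun i => C i.succ * embed (k i) (Function.update A a x i))
      (fun i => C i.succ * embed (k i) (Function.update A a y i))
      (fun i hi => by simp [Function.update_of_ne hi])
      (fun i hi => by simp [Function.update_of_ne hi])
      (by simp [Function.update_self, embed_add, mul_add])
      ((List.finRange m).reverse)
      (List.nodup_reverse.mpr (List.nodup_finRange m))
      (List.mem_reverse.mpr (List.mem_finRange a)),
    add_mul]

lemma circuit_update_smul {n m : ℕ} (C : Fin (m + 1) → QMat n) (k : Fin m → Fin n)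
    (A : Fin m → Matrix (Fin 2) (Fin 2) ℂ) (a : Fin m) (c : ℂ) (x : Matrix (Fin 2) (Fin 2) ℂ) :
    circuit C k (Function.update A a (c • x)) = c • circuit C k (Function.update A a x) := by
  rw [circuit_eq_prodmap, circuit_eq_prodmap,
    prod_map_smul a c
      (fun i => C i.succ * embed (k i) (Function.update A a (c • x) i))
      (fun i => C i.succ * embed (k i) (Function.update A a x i))
      (fun i hi => by simp [Function.update_of_ne hi])
      (by simp [Function.update_self, embed_smul, mul_smul_comm])
      ((List.finRange m).reverse)
      (List.nodup_reverse.mpr (List.nodup_finRange m))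
      (List.mem_reverse.mpr (List.mem_finRange a)),
    smul_mul_assoc]

lemma comp_update {m : ℕ} (A : Fin m → Matrix (Fin 2) (Fin 2) ℂ) (σ : Equiv.Perm (Fin m))
    (a : Fin m) (x : Matrix (Fin 2) (Fin 2) ℂ) :
    (fun i => Function.update A a x (σ i)) =
      Function.update (fun i => A (σ i)) (σ.symm a) x := by
  funext i
  rcases eq_or_ne (σ i) a with e | e
  · have : i = σ.symm a := by simpa using congrArg σ.symm e
    rw [e, this, Function.update_self, Function.update_self]
  · have : i ≠ σ.symm a := fun h => e (by simpa using congrArg σ h)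
    rw [Function.update_of_ne e, Function.update_of_ne this]

lemma pauli_unitary (q : Fin 4) : pauli q ∈ Matrix.unitaryGroup (Fin 2) ℂ := by
  rw [Matrix.mem_unitaryGroup_iff]
  fin_cases q <;>
    · show _ * star _ = _
      ext i j
      fin_cases i <;> fin_cases j <;>
        simp [pauli, PX, PY, PZ, Matrix.mul_apply, Fin.sum_univ_two, Matrix.one_apply,
          Matrix.star_apply]

lemma pauli_span (M : Matrix (Fin 2) (Fin 2) ℂ) :
    M ∈ Submodule.span ℂ (Set.range pauli) := by
  have hM : M = ((M 0 0 + M 1 1) / 2) • pauli 0 + ((M 0 1 + M 1 0) / 2) • pauli 1 +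
      ((M 0 1 - M 1 0) / 2 * Complex.I) • pauli 2 + ((M 0 0 - M 1 1) / 2) • pauli 3 := by
    ext i j
    fin_cases i <;> fin_cases j <;>
      · simp only [pauli, PX, PY, PZ, Matrix.one_apply, Matrix.add_apply, Matrix.smul_apply,
          Matrix.cons_val_zero, Matrix.cons_val_one, Matrix.head_cons, Matrix.head_fin_const,
          Matrix.cons_val', Matrix.empty_val', Matrix.cons_val_fin_one, smul_eq_mul,
          Matrix.of_apply, Matrix.cons_val_one, Matrix.cons_val]
        try norm_num
        try linear_combination (-(M 0 1 - M 1 0) / 2) * Complex.I_mul_I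
        try linear_combination ((M 0 1 - M 1 0) / 2) * Complex.I_mul_I
        try ring
  rw [hM]
  have hp : ∀ q : Fin 4, pauli q ∈ Submodule.span ℂ (Set.range pauli) :=
    fun q => Submodule.subset_span ⟨q, rfl⟩
  exact add_mem (add_mem (add_mem (Submodule.smul_mem _ _ (hp 0)) (Submodule.smul_mem _ _ (hp 1)))
    (Submodule.smul_mem _ _ (hp 2))) (Submodule.smul_mem _ _ (hp 3))


set_option maxHeartbeats 1000000 in
/-- For a fixed phase `φ` and permutation `σ`, `F'(U⃗_σ) = e^{iφ} F(U⃗)` for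
every sequence of 2×2 unitaries iff `F'(P⃗_σ) = e^{iφ} F(P⃗)` for every `P⃗ ∈ 𝒫^m`. -/
theorem stmt9 (n m : ℕ) (hn : 1 ≤ n) (hm : 1 ≤ m)
    (C C' : Fin (m + 1) → QMat n)
    (hC : ∀ i, C i ∈ Matrix.unitaryGroup (Fin n → Fin 2) ℂ)
    (hC' : ∀ i, C' i ∈ Matrix.unitaryGroup (Fin n → Fin 2) ℂ)
    (k l : Fin m → Fin n) (σ : Equiv.Perm (Fin m)) (φ : ℝ) :
    (∀ U : Fin m → Matrix (Fin 2) (Fin 2) ℂ,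
        (∀ i, U i ∈ Matrix.unitaryGroup (Fin 2) ℂ) →
        circuit C' l (fun i => U (σ i)) = phase φ • circuit C k U) ↔
    (∀ p : Fin m → Fin 4,
        circuit C' l (fun i => pauli (p (σ i))) =
          phase φ • circuit C k (fun i => pauli (p i))) := by
  constructor
  · intro h p
    have := h (fun i => pauli (p i)) (fun i => pauli_unitary (p i))
    simpa using this
  · intro hP U hU
    have key : ∀ s : Finset (Fin m), ∀ A : Fin m → Matrix (Fin 2) (Fin 2) ℂ,
        (∀ i ∉ s, ∃ p, A i = pauli p) →
        circuit C' l (fun i => A (σ i)) = phase φ • circuit C k A := by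
      intro s
      induction s using Finset.induction with
      | empty =>
        intro A hA
        choose p hp using fun i => hA i (by simp)
        have hA' : A = fun i => pauli (p i) := funext hp
        subst hA'
        simpa using hP p
      | @insert a s ha ih =>
        intro A hA
        have main : ∀ x : Matrix (Fin 2) (Fin 2) ℂ,
            x ∈ Submodule.span ℂ (Set.range pauli) →
            circuit C' l (fun i => Function.update A a x (σ i)) =
              phase φ • circuit C k (Function.update A a x) := by
          intro x hx
          induction hx using Submodule.span_induction with
          | mem x hmem =>
            obtain ⟨q, rfl⟩ := hmem
            apply ih
            intro i hi
            rcases eq_or_ne i a with rfl | hia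
            · exact ⟨q, Function.update_self _ _ _⟩
            · rw [Function.update_of_ne hia]
              exact hA i (by simp [hia, hi])
          | zero =>
            have h0 : (0 : Matrix (Fin 2) (Fin 2) ℂ) = (0 : ℂ) • (0 : Matrix (Fin 2) (Fin 2) ℂ) := by
              simp
            rw [h0, comp_update, circuit_update_smul, circuit_update_smul, ← comp_update]
            simp
          | add x y hx hy hx' hy' =>
            rw [comp_update, circuit_update_add, circuit_update_add, ← comp_update, ← comp_update,
              hx', hy', smul_add]
          | smul c x hx hx' =>
            rw [comp_update, circuit_update_smul, circuit_update_smul, ← comp_update, hx',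
              smul_comm]
        have := main (A a) (pauli_span _)
        simpa [Function.update_eq_self] using this
    exact key Finset.univ U (fun i hi => absurd (Finset.mem_univ i) hi)

end QEC
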